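/- For every finite set X with |X| ≥ 2 and every symmetric map δ : X×X → Υ, there is a labeling t of the median vertices of the extended hypercube Q^ext_{|X|} (with its leaves identified with the elements of X and root ρ) such that δ(x,y) = t(med(ρ,x,y)) for all distinct x,y ∈ X; that is, δ is explained by a labeled extended hypercube. -/

import Mathlib

/-- `m` is a median of the triple `u, v, w` in `G`. -/
def IsMedianVtx {V : Type*} (G : SimpleGraph V) (u v w m : V) : Prop :=
  G.dist u m + G.dist m v = G.dist u v ∧
  G.dist v m + G.dist m w = G.dist v w ∧
  G.dist u m + G.dist m w = G.dist u w

/-- A median graph: a connected graph in which every triple of vertices has a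
unique median. -/
def IsMedianGraph {V : Type*} (G : SimpleGraph V) : Prop :=
  G.Connected ∧ ∀ u v w : V, ∃! m : V, IsMedianVtx G u v w m

/-- The `i`-th standard unit vector of `{0,1}^n`: the vertex whose `i`-th
coordinate is `1` and all other coordinates are `0`. -/
def unitVec (n : ℕ) (i : Fin n) : Fin n → Bool := fun j => if j = i then true else false

/-- The extended hypercube `Q^ext_n`: the hypercube `Q_n` on `{0,1}^n` (edges between
vertices at Hamming distance `1`), together with `n` additional leaves `x_1, …, x_n`
(encoded as `Sum.inr i`), where `x_i` is adjacent exactly to the unit vector `e_i`. -/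
def extHypercube (n : ℕ) : SimpleGraph ((Fin n → Bool) ⊕ Fin n) where
  Adj x y :=
    match x, y with
    | Sum.inl a, Sum.inl b => hammingDist a b = 1
    | Sum.inl a, Sum.inr i => a = unitVec n i
    | Sum.inr i, Sum.inl a => a = unitVec n i
    | Sum.inr _, Sum.inr _ => False
  symm := by
    constructor
    rintro (a | i) (b | j) h
    · show hammingDist b a = 1
      rw [hammingDist_comm]
      exact h
    · exact h
    · exact h
    · exact h
  loopless := by
    constructor
    rintro (a | i) h
    · have h' : hammingDist a a = 1 := h
      rw [hammingDist_self] at h'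
      exact one_ne_zero h'.symm
    · exact h

/-- The root of the extended hypercube: the all-ones vertex `(1, …, 1)`. -/
def qRoot (n : ℕ) : (Fin n → Bool) ⊕ Fin n := Sum.inl (fun _ => true)


open SimpleGraph Finset

def qProj (n : ℕ) : (Fin n → Bool) ⊕ Fin n → (Fin n → Bool)
  | Sum.inl a => a
  | Sum.inr i => unitVec n i

lemma proj_adj {n : ℕ} {u v : (Fin n → Bool) ⊕ Fin n} (h : (extHypercube n).Adj u v) :
    hammingDist (qProj n u) (qProj n v) ≤ 1 := by
  match u, v with
  | Sum.inl a, Sum.inl b => exact le_of_eq h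
  | Sum.inl a, Sum.inr i =>
      have : a = unitVec n i := h
      simp [qProj, this, hammingDist_self]
  | Sum.inr i, Sum.inl a =>
      have : a = unitVec n i := h
      simp [qProj, this, hammingDist_self]
  | Sum.inr i, Sum.inr j => exact absurd h (by exact id)

lemma proj_walk {n : ℕ} {u v : (Fin n → Bool) ⊕ Fin n} (p : (extHypercube n).Walk u v) :
    hammingDist (qProj n u) (qProj n v) ≤ p.length := by
  induction p with
  | nil => simp [hammingDist_self]
  | cons h q ih =>
      calc hammingDist _ _ ≤ hammingDist _ _ + hammingDist _ _ := hammingDist_triangle _ _ _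
        _ ≤ 1 + q.length := Nat.add_le_add (proj_adj h) ih
        _ = (SimpleGraph.Walk.cons h q).length := by simp [SimpleGraph.Walk.length_cons]; omega

lemma hamming_update {n : ℕ} (a : Fin n → Bool) (i : Fin n) (c : Bool) (hc : a i ≠ c) :
    hammingDist a (Function.update a i c) = 1 := by
  have : ({j | a j ≠ Function.update a i c j} : Finset (Fin n)) = {i} := by
    ext j
    by_cases hj : j = i <;> simp [Function.update, hj, hc]
  rw [hammingDist, this, Finset.card_singleton]

lemma hamming_update_right {n : ℕ} (a b : Fin n → Bool) (i : Fin n) (hi : a i ≠ b i) :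
    hammingDist (Function.update a i (b i)) b = hammingDist a b - 1 := by
  have : ({j | Function.update a i (b i) j ≠ b j} : Finset (Fin n))
      = ({j | a j ≠ b j} : Finset (Fin n)).erase i := by
    ext j
    by_cases hj : j = i <;> simp [Function.update, hj]
  rw [hammingDist, hammingDist, this, Finset.card_erase_of_mem]
  simp [hi]

lemma walk_inl {n : ℕ} : ∀ (k : ℕ) (a b : Fin n → Bool), hammingDist a b = k →
    ∃ p : (extHypercube n).Walk (Sum.inl a) (Sum.inl b), p.length = k := by
  intro k
  induction k with
  | zero =>
      intro a b hab
      obtain rfl := eq_of_hammingDist_eq_zero hab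
      exact ⟨SimpleGraph.Walk.nil, rfl⟩
  | succ k ih =>
      intro a b hab
      have hne : a ≠ b := by
        intro h; rw [h, hammingDist_self] at hab; omega
      obtain ⟨i, hi⟩ : ∃ i, a i ≠ b i := by
        by_contra h; push_neg at h; exact hne (funext h)
      set a' := Function.update a i (b i) with ha'
      have h1 : hammingDist a' b = k := by
        rw [hamming_update_right a b i hi, hab]; omega
      obtain ⟨q, hq⟩ := ih a' b h1
      have hadj : (extHypercube n).Adj (Sum.inl a) (Sum.inl a') :=
        hamming_update a i (b i) hi
      exact ⟨SimpleGraph.Walk.cons hadj q, by simp [hq]⟩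

lemma dist_inl_inl {n : ℕ} (a b : Fin n → Bool) :
    (extHypercube n).dist (Sum.inl a) (Sum.inl b) = hammingDist a b := by
  obtain ⟨p, hp⟩ := walk_inl (hammingDist a b) a b rfl
  refine le_antisymm (hp ▸ SimpleGraph.dist_le p) ?_
  obtain ⟨q, hq⟩ := SimpleGraph.Reachable.exists_walk_length_eq_dist ⟨p⟩
  calc hammingDist a b = hammingDist (qProj n (Sum.inl a)) (qProj n (Sum.inl b)) := rfl
    _ ≤ q.length := proj_walk q
    _ = _ := hq

lemma adj_leaf {n : ℕ} (i : Fin n) : (extHypercube n).Adj (Sum.inl (unitVec n i)) (Sum.inr i) :=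
  rfl

lemma walk_from_inr {n : ℕ} {i : Fin n} {z : (Fin n → Bool) ⊕ Fin n}
    (p : (extHypercube n).Walk (Sum.inr i) z) (hz : Sum.inr i ≠ z) :
    hammingDist (unitVec n i) (qProj n z) + 1 ≤ p.length := by
  cases p with
  | nil => exact absurd rfl hz
  | @cons _ v _ h q =>
      match v, h with
      | Sum.inl b, h =>
          have hb : b = unitVec n i := h
          subst hb
          have h2 : hammingDist (unitVec n i) (qProj n z) ≤ q.length := proj_walk q
          simp only [SimpleGraph.Walk.length_cons]
          omega

lemma walk_inl_inr {n : ℕ} {a : Fin n → Bool} {i : Fin n}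
    (p : (extHypercube n).Walk (Sum.inl a) (Sum.inr i)) :
    hammingDist a (unitVec n i) + 1 ≤ p.length := by
  have := walk_from_inr p.reverse (by simp)
  rw [SimpleGraph.Walk.length_reverse] at this
  rw [hammingDist_comm]
  exact this

lemma dist_inl_inr {n : ℕ} (a : Fin n → Bool) (i : Fin n) :
    (extHypercube n).dist (Sum.inl a) (Sum.inr i) = hammingDist a (unitVec n i) + 1 := by
  obtain ⟨p, hp⟩ := walk_inl (hammingDist a (unitVec n i)) a (unitVec n i) rfl
  refine le_antisymm ?_ ?_
  · have := SimpleGraph.dist_le (p.concat (adj_leaf i))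
    rwa [SimpleGraph.Walk.length_concat, hp] at this
  · obtain ⟨q, hq⟩ := SimpleGraph.Reachable.exists_walk_length_eq_dist ⟨p.concat (adj_leaf i)⟩
    have := walk_inl_inr q
    omega

lemma dist_inr_inr {n : ℕ} {i j : Fin n} (hij : i ≠ j) :
    (extHypercube n).dist (Sum.inr i) (Sum.inr j)
      = hammingDist (unitVec n i) (unitVec n j) + 2 := by
  obtain ⟨p, hp⟩ := walk_inl (hammingDist (unitVec n i) (unitVec n j)) _ _ rfl
  refine le_antisymm ?_ ?_
  · have := SimpleGraph.dist_le (SimpleGraph.Walk.cons ((adj_leaf i).symm) (p.concat (adj_leaf j)))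
    simp only [SimpleGraph.Walk.length_cons, SimpleGraph.Walk.length_concat, hp] at this
    omega
  · obtain ⟨q, hq⟩ := SimpleGraph.Reachable.exists_walk_length_eq_dist
      ⟨SimpleGraph.Walk.cons ((adj_leaf i).symm) (p.concat (adj_leaf j))⟩
    rw [← hq]
    cases q with
    | nil => exact absurd rfl hij
    | @cons _ v _ h q' =>
        match v, h with
        | Sum.inl b, h =>
            have hb : b = unitVec n i := h
            subst hb
            have := walk_inl_inr q'
            simp only [SimpleGraph.Walk.length_cons]
            omega

def mVtx {n : ℕ} (i j : Fin n) : Fin n → Bool := fun k => decide (k = i) || decide (k = j)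

lemma ham_ones_mVtx {n : ℕ} {i j : Fin n} (hij : i ≠ j) :
    hammingDist (fun _ => true) (mVtx i j) = n - 2 := by
  have hset : ({k | (fun _ => true) k ≠ mVtx i j k} : Finset (Fin n)) = ({i, j} : Finset (Fin n))ᶜ := by
    ext k
    by_cases h1 : k = i <;> by_cases h2 : k = j <;> simp [mVtx, h1, h2]
  rw [hammingDist, hset, Finset.card_compl, Finset.card_pair hij, Fintype.card_fin]

lemma ham_mVtx_unit {n : ℕ} {i j : Fin n} (hij : i ≠ j) :
    hammingDist (mVtx i j) (unitVec n i) = 1 := by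
  have hset : ({k | mVtx i j k ≠ unitVec n i k} : Finset (Fin n)) = {j} := by
    ext k
    by_cases h1 : k = i <;> by_cases h2 : k = j
    · subst h1; subst h2; exact absurd rfl hij
    · subst h1; simp [mVtx, unitVec, hij]
    · subst h2; simp [mVtx, unitVec, Ne.symm hij]
    · simp [mVtx, unitVec, h1, h2]
  rw [hammingDist, hset, Finset.card_singleton]

lemma ham_ones_unit {n : ℕ} (i : Fin n) :
    hammingDist (fun _ => true) (unitVec n i) = n - 1 := by
  have hset : ({k | (fun _ => true) k ≠ unitVec n i k} : Finset (Fin n)) = ({i} : Finset (Fin n))ᶜ := by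
    ext k
    by_cases h1 : k = i <;> simp [unitVec, h1]
  rw [hammingDist, hset, Finset.card_compl, Finset.card_singleton, Fintype.card_fin]

lemma ham_unit_unit {n : ℕ} {i j : Fin n} (hij : i ≠ j) :
    hammingDist (unitVec n i) (unitVec n j) = 2 := by
  have hset : ({k | unitVec n i k ≠ unitVec n j k} : Finset (Fin n)) = {i, j} := by
    ext k
    by_cases h1 : k = i <;> by_cases h2 : k = j
    · subst h1; subst h2; exact absurd rfl hij
    · subst h1; simp [unitVec, hij, Ne.symm hij]
    · subst h2; simp [unitVec, hij, Ne.symm hij]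
    · simp [unitVec, h1, h2]
  rw [hammingDist, hset, Finset.card_pair hij]

noncomputable def labelFun {Υ : Type*} (n : ℕ) (f : Fin n → Fin n → Υ) (d : Υ) :
    ((Fin n → Bool) ⊕ Fin n) → Υ
  | Sum.inl a =>
      if h : ({k | a k = true} : Finset (Fin n)).Nonempty
      then f (({k | a k = true} : Finset (Fin n)).min' h) (({k | a k = true} : Finset (Fin n)).max' h)
      else d
  | Sum.inr _ => d

lemma labelFun_mVtx {Υ : Type*} {n : ℕ} (f : Fin n → Fin n → Υ) (d : Υ) {i j : Fin n}
    (hij : i ≠ j) : labelFun n f d (Sum.inl (mVtx i j)) = f (min i j) (max i j) := by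
  have hset : ({k | mVtx i j k = true} : Finset (Fin n)) = {i, j} := by
    ext k; simp [mVtx]
  have hne : ({k | mVtx i j k = true} : Finset (Fin n)).Nonempty := by
    rw [hset]; exact ⟨i, by simp⟩
  have hmin : ({k | mVtx i j k = true} : Finset (Fin n)).min' hne = min i j := by
    refine le_antisymm ?_ ?_
    · rcases min_cases i j with ⟨h, _⟩ | ⟨h, _⟩
      · rw [h]; exact Finset.min'_le _ _ (by rw [hset]; simp)
      · rw [h]; exact Finset.min'_le _ _ (by rw [hset]; simp)
    · refine Finset.le_min' _ _ _ ?_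
      intro y hy
      rw [hset] at hy
      rcases Finset.mem_insert.mp hy with rfl | hy
      · exact min_le_left _ _
      · rw [Finset.mem_singleton] at hy; subst hy; exact min_le_right _ _
  have hmax : ({k | mVtx i j k = true} : Finset (Fin n)).max' hne = max i j := by
    refine le_antisymm ?_ ?_
    · refine Finset.max'_le _ _ _ ?_
      intro y hy
      rw [hset] at hy
      rcases Finset.mem_insert.mp hy with rfl | hy
      · exact le_max_left _ _
      · rw [Finset.mem_singleton] at hy; subst hy; exact le_max_right _ _
    · rcases max_cases i j with ⟨h, _⟩ | ⟨h, _⟩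
      · rw [h]; exact Finset.le_max' _ _ (by rw [hset]; simp)
      · rw [h]; exact Finset.le_max' _ _ (by rw [hset]; simp)
  simp only [labelFun, dif_pos hne, hmin, hmax]

lemma mVtx_comm {n : ℕ} (i j : Fin n) : mVtx i j = mVtx j i := by
  funext k; simp [mVtx, Bool.or_comm]

/-- Every symmetric map `δ` on a finite set `X` with `|X| ≥ 2` can be
explained by a labeled extended hypercube `Q^ext_{|X|}`: identifying the leaves of
`Q^ext_{|X|}` with the elements of `X` (via a bijection `e : X ≃ Fin |X|`), there is a
labeling `t` such that `δ x y = t (med(ρ, x, y))` for all distinct `x, y ∈ X`. -/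
theorem stmt_4 {X Υ : Type*} [Fintype X] (h2 : 2 ≤ Fintype.card X)
    (δ : X → X → Υ) (hsym : ∀ x y : X, x ≠ y → δ x y = δ y x)
    (e : X ≃ Fin (Fintype.card X)) :
    ∃ t : ((Fin (Fintype.card X) → Bool) ⊕ Fin (Fintype.card X)) → Υ,
      ∀ x y : X, x ≠ y →
        ∃ m, IsMedianVtx (extHypercube (Fintype.card X)) (qRoot (Fintype.card X))
              (Sum.inr (e x)) (Sum.inr (e y)) m ∧
          t m = δ x y := by
  haveI : Nonempty X := Fintype.card_pos_iff.mp (by omega)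
  let n := Fintype.card X
  refine ⟨labelFun n (fun i j => δ (e.symm i) (e.symm j))
      (δ (Classical.arbitrary X) (Classical.arbitrary X)), ?_⟩
  intro x y hxy
  have hij : e x ≠ e y := fun h => hxy (e.injective h)
  refine ⟨Sum.inl (mVtx (e x) (e y)), ?_, ?_⟩
  · have d1 : (extHypercube n).dist (qRoot n) (Sum.inl (mVtx (e x) (e y))) = n - 2 := by
      rw [qRoot, dist_inl_inl, ham_ones_mVtx hij]
    have d2 : (extHypercube n).dist (Sum.inl (mVtx (e x) (e y))) (Sum.inr (e x)) = 2 := by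
      rw [dist_inl_inr, ham_mVtx_unit hij]
    have d3 : (extHypercube n).dist (Sum.inl (mVtx (e x) (e y))) (Sum.inr (e y)) = 2 := by
      rw [mVtx_comm, dist_inl_inr, ham_mVtx_unit (Ne.symm hij)]
    have d4 : (extHypercube n).dist (qRoot n) (Sum.inr (e x)) = n := by
      rw [qRoot, dist_inl_inr, ham_ones_unit]; omega
    have d5 : (extHypercube n).dist (qRoot n) (Sum.inr (e y)) = n := by
      rw [qRoot, dist_inl_inr, ham_ones_unit]; omega
    have d6 : (extHypercube n).dist (Sum.inr (e x)) (Sum.inr (e y)) = 4 := by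
      rw [dist_inr_inr hij, ham_unit_unit hij]
    refine ⟨?_, ?_, ?_⟩
    · rw [d1, d2, d4]; omega
    · rw [SimpleGraph.dist_comm, d2, d3, d6]
    · rw [d1, d3, d5]; omega
  · rw [labelFun_mVtx _ _ hij]
    rcases lt_trichotomy (e x) (e y) with h | h | h
    · rw [min_eq_left h.le, max_eq_right h.le, Equiv.symm_apply_apply, Equiv.symm_apply_apply]
    · exact absurd h hij
    · rw [min_eq_right h.le, max_eq_left h.le, Equiv.symm_apply_apply, Equiv.symm_apply_apply]
      exact (hsym x y hxy).symm
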